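/- (Projection-lemma lower bound.) Let H_0 be a positive semidefinite Hermitian operator on a finite-dimensional complex inner product space whose kernel is one-dimensional and spanned by a unit vector ψ, and suppose the smallest non-zero eigenvalue of H_0 is at least μ > 0. Let V be a Hermitian operator and Δ > 0 with Δμ > 2‖V‖ (operator norm). Then λ_0(Δ H_0 + V) ≥ ⟨ψ, V ψ⟩ − ‖V‖²/(Δμ − 2‖V‖). -/

import Mathlib

open scoped InnerProductSpace ComplexOrder

/-- Eigenvalues of a Hermitian matrix, listed in non-decreasing order with multiplicity
(junk value `0` for non-Hermitian matrices). -/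
noncomputable def eigs {N : ℕ} (A : Matrix (Fin N) (Fin N) ℂ) : Fin N → ℝ :=
  if hA : A.IsHermitian then hA.eigenvalues ∘ Tuple.sort hA.eigenvalues else 0

/-- The operator norm of a matrix, acting on Euclidean space. -/
noncomputable def opNorm {N : ℕ} (A : Matrix (Fin N) (Fin N) ℂ) : ℝ :=
  ‖Matrix.toEuclideanCLM (𝕜 := ℂ) (n := Fin N) A‖

namespace ProjLemAux
variable {N : ℕ}
local notation "E" => EuclideanSpace ℂ (Fin N)

noncomputable def mv (A : Matrix (Fin N) (Fin N) ℂ) (x : E) : E := WithLp.toLp 2 (A.mulVec x)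

lemma mv_eq_clm (A : Matrix (Fin N) (Fin N) ℂ) (x : E) :
    mv A x = Matrix.toEuclideanCLM (𝕜 := ℂ) A x := rfl

lemma herm_inner (A : Matrix (Fin N) (Fin N) ℂ) (hA : A.IsHermitian) (x y : E) :
    ⟪mv A x, y⟫_ℂ = ⟪x, mv A y⟫_ℂ := by
  have h := (Matrix.isHermitian_iff_isSymmetric.1 hA) x y
  simpa [Matrix.toEuclideanLin_apply, mv] using h

lemma norm_mv_le (A : Matrix (Fin N) (Fin N) ℂ) (x : E) : ‖mv A x‖ ≤ opNorm A * ‖x‖ := by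
  rw [mv_eq_clm]; exact (Matrix.toEuclideanCLM (𝕜 := ℂ) A).le_opNorm x

lemma inner_mv_le (A : Matrix (Fin N) (Fin N) ℂ) (x y : E) :
    ‖⟪x, mv A y⟫_ℂ‖ ≤ ‖x‖ * (opNorm A * ‖y‖) := by
  refine (norm_inner_le_norm _ _).trans ?_
  exact mul_le_mul_of_nonneg_left (norm_mv_le A y) (norm_nonneg x)

lemma re_ge_neg_norm (z : ℂ) : -‖z‖ ≤ z.re := by
  simpa using neg_le_of_abs_le (Complex.abs_re_le_norm z)

lemma re_le_norm (z : ℂ) : z.re ≤ ‖z‖ := by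
  simpa using le_of_abs_le (Complex.abs_re_le_norm z)

lemma mv_add (A : Matrix (Fin N) (Fin N) ℂ) (x y : E) : mv A (x + y) = mv A x + mv A y := by
  simp [mv_eq_clm]

lemma mv_smul (A : Matrix (Fin N) (Fin N) ℂ) (c : ℂ) (x : E) : mv A (c • x) = c • mv A x := by
  simp [mv_eq_clm]

lemma mv_add_mat (A B : Matrix (Fin N) (Fin N) ℂ) (x : E) : mv (A + B) x = mv A x + mv B x := by
  simp [mv_eq_clm, map_add]

lemma mv_smul_mat (A : Matrix (Fin N) (Fin N) ℂ) (c : ℂ) (x : E) :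
    mv (c • A) x = c • mv A x := by
  simp [mv_eq_clm, map_smul]

lemma mv_eigen (A : Matrix (Fin N) (Fin N) ℂ) (hA : A.IsHermitian) (i : Fin N) :
    mv A (hA.eigenvectorBasis i) = (hA.eigenvalues i : ℂ) • hA.eigenvectorBasis i := by
  have h := hA.mulVec_eigenvectorBasis i
  ext j; have h2 := congrFun h j
  simpa [mv, Complex.real_smul] using h2

lemma eigs_eq (A : Matrix (Fin N) (Fin N) ℂ) (hA : A.IsHermitian) (i : Fin N) :
    eigs A i = hA.eigenvalues (Tuple.sort hA.eigenvalues i) := by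
  simp [eigs, dif_pos hA]

lemma eigs_surj (A : Matrix (Fin N) (Fin N) ℂ) (hA : A.IsHermitian) (i : Fin N) :
    ∃ j, eigs A j = hA.eigenvalues i :=
  ⟨(Tuple.sort hA.eigenvalues).symm i, by simp [eigs_eq A hA]⟩

lemma conj_mul' (z : ℂ) : (starRingEnd ℂ) z * z = (Complex.normSq z : ℂ) := by
  rw [mul_comm, Complex.mul_conj]

lemma K1 (H0 : Matrix (Fin N) (Fin N) ℂ) (hH0 : H0.PosSemidef)
    (ψ : EuclideanSpace ℂ (Fin N))
    (hker : ∀ v : Fin N → ℂ, H0.mulVec v = 0 ↔ ∃ c : ℂ, v = c • ψ)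
    (μ : ℝ)
    (hμ : ∀ i : Fin N, eigs H0 i ≠ 0 → μ ≤ eigs H0 i)
    (w : E) (hw : ⟪ψ, w⟫_ℂ = 0) :
    μ * ‖w‖ ^ 2 ≤ (⟪w, mv H0 w⟫_ℂ).re := by
  have hH := hH0.1
  have hμ' : ∀ i, hH.eigenvalues i ≠ 0 → μ ≤ hH.eigenvalues i := by
    intro i hi
    obtain ⟨j, hj⟩ := eigs_surj H0 hH i
    exact hj ▸ hμ j (by rw [hj]; exact hi)
  have hterm : ∀ i, ⟪hH.eigenvectorBasis i, mv H0 w⟫_ℂ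
      = (hH.eigenvalues i : ℂ) * ⟪hH.eigenvectorBasis i, w⟫_ℂ := by
    intro i
    rw [← herm_inner _ hH, mv_eigen _ hH, inner_smul_left, Complex.conj_ofReal]
  have hsum : ⟪w, mv H0 w⟫_ℂ
      = ∑ i, (hH.eigenvalues i : ℂ) * ((Complex.normSq ⟪hH.eigenvectorBasis i, w⟫_ℂ : ℂ)) := by
    rw [← hH.eigenvectorBasis.sum_inner_mul_inner w (mv H0 w)]
    refine Finset.sum_congr rfl fun i _ => ?_
    rw [hterm i, ← inner_conj_symm w (hH.eigenvectorBasis i)]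
    have e3 := conj_mul' ⟪hH.eigenvectorBasis i, w⟫_ℂ
    linear_combination (hH.eigenvalues i : ℂ) * e3
  have hww : (⟪w, w⟫_ℂ).re = ‖w‖ ^ 2 := inner_self_eq_norm_sq (𝕜 := ℂ) w
  have h2 : ⟪w, w⟫_ℂ = ∑ i, ((Complex.normSq ⟪hH.eigenvectorBasis i, w⟫_ℂ : ℂ)) := by
    rw [← hH.eigenvectorBasis.sum_inner_mul_inner w w]
    refine Finset.sum_congr rfl fun i _ => ?_
    rw [← inner_conj_symm w (hH.eigenvectorBasis i)]
    exact conj_mul' _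
  have hnorm : ‖w‖ ^ 2 = ∑ i, Complex.normSq ⟪hH.eigenvectorBasis i, w⟫_ℂ := by
    rw [← hww, h2, Complex.re_sum]
    simp
  have hre : (⟪w, mv H0 w⟫_ℂ).re
      = ∑ i, hH.eigenvalues i * Complex.normSq ⟪hH.eigenvectorBasis i, w⟫_ℂ := by
    rw [hsum, Complex.re_sum]
    refine Finset.sum_congr rfl fun i _ => ?_
    rw [← Complex.ofReal_mul, Complex.ofReal_re]
  rw [hre, hnorm, Finset.mul_sum]
  refine Finset.sum_le_sum fun i _ => ?_
  by_cases h0 : hH.eigenvalues i = 0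
  · have hv0 : mv H0 (hH.eigenvectorBasis i) = 0 := by rw [mv_eigen _ hH i, h0]; simp
    have hv0' : H0.mulVec (hH.eigenvectorBasis i) = 0 := by
      funext j; exact congrFun (congrArg (fun (z : E) => (z : Fin N → ℂ)) hv0) j
    obtain ⟨c, hc⟩ := (hker (hH.eigenvectorBasis i)).1 hv0'
    have hBi : (hH.eigenvectorBasis i : E) = c • ψ := by ext j; exact congrFun hc j
    have hz : ⟪hH.eigenvectorBasis i, w⟫_ℂ = 0 := by rw [hBi, inner_smul_left, hw, mul_zero]
    simp [hz]
  · have h1 := hμ' i h0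
    have h2 : (0:ℝ) ≤ Complex.normSq ⟪hH.eigenvectorBasis i, w⟫_ℂ := Complex.normSq_nonneg _
    nlinarith

end ProjLemAux

set_option maxHeartbeats 1000000 in
open ProjLemAux in
/-- projection-lemma lower bound: if `H_0 ⪰ 0` has one-dimensional kernel
spanned by the unit vector `ψ`, its smallest non-zero eigenvalue is ≥ `μ > 0`,
`V` is Hermitian and `Δ μ > 2‖V‖`, then
`λ_0(Δ H_0 + V) ≥ ⟨ψ, V ψ⟩ − ‖V‖²/(Δμ − 2‖V‖)`. -/
theorem projection_lemma_lower_bound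
    (N : ℕ) (hN : 0 < N) (H0 V : Matrix (Fin N) (Fin N) ℂ)
    (hH0 : H0.PosSemidef) (hV : V.IsHermitian)
    (ψ : EuclideanSpace ℂ (Fin N)) (hψ : ‖ψ‖ = 1)
    (hker : ∀ v : Fin N → ℂ, H0.mulVec v = 0 ↔ ∃ c : ℂ, v = c • ψ)
    (μ : ℝ) (hμpos : 0 < μ)
    (hμ : ∀ i : Fin N, eigs H0 i ≠ 0 → μ ≤ eigs H0 i)
    (Δ : ℝ) (hΔ : 0 < Δ) (hgap : 2 * opNorm V < Δ * μ) :
    (⟪ψ, (WithLp.toLp 2 (V.mulVec ψ) : EuclideanSpace ℂ (Fin N))⟫_ℂ).re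
        - (opNorm V) ^ 2 / (Δ * μ - 2 * opNorm V)
      ≤ eigs ((Δ : ℂ) • H0 + V) ⟨0, hN⟩ := by
  classical
  set M : Matrix (Fin N) (Fin N) ℂ := (Δ : ℂ) • H0 + V with hM
  set b : ℝ := opNorm V with hbdef
  have hb0 : 0 ≤ b := norm_nonneg _
  set c : ℝ := (⟪ψ, mv V ψ⟫_ℂ).re with hcdef
  set g0 : ℝ := Δ * μ - 2 * b with hg0def
  have hg0 : 0 < g0 := by rw [hg0def]; linarith
  -- |c| ≤ b
  have hcb : |c| ≤ b := by
    have h1 : ‖⟪ψ, mv V ψ⟫_ℂ‖ ≤ ‖ψ‖ * (b * ‖ψ‖) := inner_mv_le V ψ ψ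
    rw [hψ] at h1
    have := Complex.abs_re_le_norm ⟪ψ, mv V ψ⟫_ℂ
    rw [hcdef]; nlinarith
  -- Hermiticity of M
  have hH : M.IsHermitian := by
    have h1 : ((Δ : ℂ) • H0).IsHermitian := by
      unfold Matrix.IsHermitian
      rw [Matrix.conjTranspose_smul, hH0.1.eq]
      congr 1
      simp [Complex.conj_ofReal]
    exact h1.add hV
  have hψ0 : mv H0 ψ = 0 := by
    have h := (hker ψ).2 ⟨1, (one_smul ℂ _).symm⟩
    ext j; exact congrFun h j
  -- main Rayleigh bound
  have key : ∀ x : EuclideanSpace ℂ (Fin N), ‖x‖ = 1 → c - b ^ 2 / g0 ≤ (⟪x, mv M x⟫_ℂ).re := by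
    intro x hx
    set α : ℂ := ⟪ψ, x⟫_ℂ with hα
    set w : EuclideanSpace ℂ (Fin N) := x - α • ψ with hwdef
    set a : ℝ := ‖α‖ with hadef
    set s : ℝ := ‖w‖ with hsdef
    have ha0 : 0 ≤ a := norm_nonneg _
    have hs0 : 0 ≤ s := norm_nonneg _
    have hψψ : ⟪ψ, ψ⟫_ℂ = 1 := by
      rw [inner_self_eq_norm_sq_to_K, hψ]; norm_num
    have hww : ⟪ψ, w⟫_ℂ = 0 := by
      rw [hwdef, inner_sub_right, inner_smul_right, hψψ, mul_one, sub_self]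
    have hx_decomp : x = α • ψ + w := by rw [hwdef]; abel
    -- Pythagoras
    have hpyth : a ^ 2 + s ^ 2 = 1 := by
      have h := norm_add_sq (𝕜 := ℂ) (α • ψ) w
      have h2 : ⟪α • ψ, w⟫_ℂ = 0 := by rw [inner_smul_left, hww, mul_zero]
      rw [← hx_decomp, hx, h2] at h
      have h3 : ‖α • ψ‖ = a := by rw [norm_smul, hψ, mul_one]
      rw [h3] at h
      simp at h
      nlinarith
    have ha1 : a ≤ 1 := by nlinarith
    -- split M
    have hsplit : (⟪x, mv M x⟫_ℂ).re = Δ * (⟪x, mv H0 x⟫_ℂ).re + (⟪x, mv V x⟫_ℂ).re := by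
      rw [hM, mv_add_mat, mv_smul_mat, inner_add_right, inner_smul_right, Complex.add_re]
      congr 1
      simp [Complex.mul_re]
    -- H0 part
    have hH0part : μ * s ^ 2 ≤ (⟪x, mv H0 x⟫_ℂ).re := by
      have h1 : mv H0 x = mv H0 w := by
        rw [hx_decomp, mv_add, mv_smul, hψ0, smul_zero, zero_add]
      have h2 : ⟪x, mv H0 x⟫_ℂ = ⟪w, mv H0 w⟫_ℂ := by
        rw [h1, hx_decomp, inner_add_left, inner_smul_left, ← herm_inner _ hH0.1, hψ0]
        simp
      rw [h2]
      exact K1 H0 hH0 ψ hker μ hμ w hww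
    -- V part
    have hVpart : a ^ 2 * c - 2 * a * b * s - b * s ^ 2 ≤ (⟪x, mv V x⟫_ℂ).re := by
      have hdec : ⟪x, mv V x⟫_ℂ
          = (starRingEnd ℂ) α * α * ⟪ψ, mv V ψ⟫_ℂ + (starRingEnd ℂ) α * ⟪ψ, mv V w⟫_ℂ
            + α * ⟪w, mv V ψ⟫_ℂ + ⟪w, mv V w⟫_ℂ := by
        rw [hx_decomp, mv_add, mv_smul, inner_add_left, inner_add_right, inner_add_right,
          inner_smul_left, inner_smul_left, inner_smul_right, inner_smul_right]
        ring
      have e1 : ((starRingEnd ℂ) α * α * ⟪ψ, mv V ψ⟫_ℂ).re = a ^ 2 * c := by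
        rw [conj_mul', Complex.re_ofReal_mul]
        have hns : Complex.normSq α = a ^ 2 := by
          rw [hadef, Complex.sq_norm]
        rw [hns, hcdef]
      have e2 : -(a * (b * s)) ≤ ((starRingEnd ℂ) α * ⟪ψ, mv V w⟫_ℂ).re := by
        refine le_trans ?_ (re_ge_neg_norm _)
        have h1 : ‖(starRingEnd ℂ) α * ⟪ψ, mv V w⟫_ℂ‖ ≤ a * (b * s) := by
          rw [norm_mul, RCLike.norm_conj]
          have := inner_mv_le V ψ w
          rw [hψ, one_mul] at this
          exact mul_le_mul_of_nonneg_left this ha0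
        linarith
      have e3 : -(a * (s * b)) ≤ (α * ⟪w, mv V ψ⟫_ℂ).re := by
        refine le_trans ?_ (re_ge_neg_norm _)
        have h1 : ‖α * ⟪w, mv V ψ⟫_ℂ‖ ≤ a * (s * b) := by
          rw [norm_mul]
          have := inner_mv_le V w ψ
          rw [hψ, mul_one] at this
          exact mul_le_mul_of_nonneg_left this ha0
        linarith
      have e4 : -(s * (b * s)) ≤ (⟪w, mv V w⟫_ℂ).re := by
        refine le_trans ?_ (re_ge_neg_norm _)
        have := inner_mv_le V w w
        linarith
      rw [hdec]
      simp only [Complex.add_re]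
      rw [e1]
      nlinarith
    rw [hsplit]
    have habs := abs_le.1 hcb
    have hA : Δ * (μ * s ^ 2) ≤ Δ * (⟪x, mv H0 x⟫_ℂ).re :=
      mul_le_mul_of_nonneg_left hH0part hΔ.le
    have h1 : 0 ≤ g0 * s ^ 2 - 2 * b * s + b ^ 2 / g0 := by
      have hq := div_nonneg (sq_nonneg (g0 * s - b)) hg0.le
      have he : (g0 * s - b) ^ 2 / g0 = g0 * s ^ 2 - 2 * b * s + b ^ 2 / g0 := by
        field_simp; ring
      linarith [he ▸ hq]
    have h3 : a * b * s ≤ b * s := by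
      nlinarith [mul_nonneg (sub_nonneg.2 ha1) (mul_nonneg hb0 hs0)]
    have h5 : a ^ 2 * c = c - s ^ 2 * c := by linear_combination c * hpyth
    have h4 : s ^ 2 * c ≤ s ^ 2 * b := by
      nlinarith [mul_nonneg (mul_nonneg hs0 hs0) (sub_nonneg.2 habs.2)]
    have h6 : Δ * (μ * s ^ 2) = g0 * s ^ 2 + 2 * b * s ^ 2 := by rw [hg0def]; ring
    linarith
  -- conclude via eigenvector
  obtain ⟨i, hgoal⟩ : ∃ i, eigs M ⟨0, hN⟩ = hH.eigenvalues i :=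
    ⟨Tuple.sort hH.eigenvalues ⟨0, hN⟩, eigs_eq M hH _⟩
  have hx1 : ‖hH.eigenvectorBasis i‖ = 1 := hH.eigenvectorBasis.orthonormal.1 i
  have hxx : (⟪hH.eigenvectorBasis i, mv M (hH.eigenvectorBasis i)⟫_ℂ).re
      = hH.eigenvalues i := by
    rw [mv_eigen _ hH, inner_smul_right, inner_self_eq_norm_sq_to_K, hx1]
    simp
  have hfin := key (hH.eigenvectorBasis i) hx1
  rw [hxx] at hfin
  rw [hgoal]
  have hVψ : (⟪ψ, (WithLp.toLp 2 (V.mulVec ψ) : EuclideanSpace ℂ (Fin N))⟫_ℂ).re = c := rfl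
  rw [hVψ]
  exact hfin
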